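/- arXiv:1109.6239 — 3 statements merged into one kernel-verified Lean document; each statement's English description precedes it below -/
import Mathlib

section
/- Factorization implies marginal independence by induction on zeros: let X_V be a vector of binary (0/1-valued) random variables with strictly positive joint distribution, and A, B disjoint nonempty subsets of V. If P(X_{A'} = 1, X_{B'} = 1) = P(X_{A'} = 1)·P(X_{B'} = 1) for all A' ⊆ A and B' ⊆ B, then X_A and X_B are independent, i.e., P(X_{A∪B} = i_{A∪B}) = P(X_A = i_A)·P(X_B = i_B) for every cell i_{A∪B} ∈ {0,1}^{A∪B}. -/
open Finset

/-- Probability that the subvector `X_A` shows the cell pattern `i ⊆ A`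
(coordinates in `i` equal to 1, coordinates in `A \ i` equal to 0), for a
binary random vector whose joint distribution on `{0,1}^V` is encoded by the
vector `π` indexed by subsets of `V`. -/
def cellProb {V : Type*} [Fintype V] [DecidableEq V]
    (π : Finset V → ℝ) (A i : Finset V) : ℝ :=
  ∑ H ∈ univ.powerset.filter (fun H => H ∩ A = i), π H

/-- The mean parameter: `μ_D = P(X_D = 1_D)`. -/
def mu {V : Type*} [Fintype V] [DecidableEq V]
    (π : Finset V → ℝ) (D : Finset V) : ℝ :=
  ∑ H ∈ univ.powerset.filter (fun H => D ⊆ H), π H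

/-- The log-mean linear parameter `γ_D = Σ_{E ⊆ D} (-1)^{|D\E|} log μ_E`. -/
noncomputable def gam {V : Type*} [Fintype V] [DecidableEq V]
    (π : Finset V → ℝ) (D : Finset V) : ℝ :=
  ∑ E ∈ D.powerset, (-1 : ℝ) ^ (D \ E).card * Real.log (mu π E)

lemma alt_sum_real {V : Type*} [DecidableEq V] (x : Finset V) :
    (∑ m ∈ x.powerset, (-1 : ℝ) ^ m.card) = if x = ∅ then 1 else 0 := by
  have h := Finset.sum_powerset_neg_one_pow_card (x := x)
  have h2 : ((∑ m ∈ x.powerset, (-1 : ℤ) ^ m.card : ℤ) : ℝ)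
      = ∑ m ∈ x.powerset, (-1 : ℝ) ^ m.card := by push_cast; ring_nf
  rw [← h2, h]
  split <;> simp

lemma cell_eq_alt {V : Type*} [Fintype V] [DecidableEq V]
    (π : Finset V → ℝ) (A i : Finset V) (hi : i ⊆ A) :
    cellProb π A i = ∑ S ∈ (A \ i).powerset, (-1 : ℝ) ^ S.card * mu π (i ∪ S) := by
  unfold cellProb mu
  rw [Finset.sum_filter]
  have : ∀ S : Finset V, (-1 : ℝ) ^ S.card *
      (∑ H ∈ univ.powerset.filter (fun H => i ∪ S ⊆ H), π H)
      = ∑ H ∈ univ.powerset, if i ∪ S ⊆ H then (-1 : ℝ) ^ S.card * π H else 0 := by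
    intro S
    rw [Finset.sum_filter, Finset.mul_sum]
    exact Finset.sum_congr rfl fun H _ => by split <;> simp
  simp only [this]
  rw [Finset.sum_comm]
  refine Finset.sum_congr rfl fun H _ => ?_
  by_cases hiH : i ⊆ H
  · have hset : (A \ i).powerset.filter (fun S => i ∪ S ⊆ H) = ((A \ i) ∩ H).powerset := by
      ext S
      simp only [mem_filter, mem_powerset, Finset.subset_inter_iff, Finset.union_subset_iff]
      tauto
    have : (∑ S ∈ (A \ i).powerset, if i ∪ S ⊆ H then (-1 : ℝ) ^ S.card * π H else 0)
        = ∑ S ∈ ((A \ i) ∩ H).powerset, (-1 : ℝ) ^ S.card * π H := by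
      rw [← Finset.sum_filter, hset]
    rw [this, ← Finset.sum_mul, alt_sum_real]
    by_cases hc : H ∩ A = i
    · have : (A \ i) ∩ H = ∅ := by
        ext x
        simp only [mem_inter, mem_sdiff, notMem_empty, iff_false, not_and]
        intro ⟨hxA, hxi⟩ hxH
        exact hxi (hc ▸ Finset.mem_inter.2 ⟨hxH, hxA⟩)
      rw [if_pos hc, if_pos this, one_mul]
    · have : (A \ i) ∩ H ≠ ∅ := by
        intro he
        apply hc
        apply Finset.Subset.antisymm
        · intro x hx
          rw [Finset.mem_inter] at hx
          by_contra hxi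
          have : x ∈ (A \ i) ∩ H := Finset.mem_inter.2 ⟨Finset.mem_sdiff.2 ⟨hx.2, hxi⟩, hx.1⟩
          simp [he] at this
        · exact Finset.subset_inter hiH hi
      rw [if_neg hc, if_neg this, zero_mul]
  · have hc : H ∩ A ≠ i := fun h => hiH (h ▸ Finset.inter_subset_left)
    rw [if_neg hc]
    refine (Finset.sum_eq_zero fun S _ => ?_).symm
    rw [if_neg fun h => hiH (Finset.union_subset_iff.1 h).1]

lemma sum_powerset_union_disjoint {V : Type*} [DecidableEq V] {a b : Finset V}
    (h : Disjoint a b) (f : Finset V → ℝ) :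
    ∑ S ∈ (a ∪ b).powerset, f S = ∑ s ∈ a.powerset, ∑ t ∈ b.powerset, f (s ∪ t) := by
  rw [← Finset.sum_product']
  refine Finset.sum_nbij' (fun S => (S ∩ a, S ∩ b)) (fun p => p.1 ∪ p.2) ?_ ?_ ?_ ?_ ?_
  · intro S hS
    simp only [Finset.mem_product, mem_powerset]
    exact ⟨Finset.inter_subset_right, Finset.inter_subset_right⟩
  · intro p hp
    simp only [Finset.mem_product, mem_powerset] at hp ⊢
    exact Finset.union_subset_union hp.1 hp.2
  · intro S hS
    rw [mem_powerset] at hS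
    show S ∩ a ∪ S ∩ b = S
    rw [← Finset.inter_union_distrib_left]
    exact Finset.inter_eq_left.2 hS
  · intro p hp
    simp only [Finset.mem_product, mem_powerset] at hp
    have h1 : (p.1 ∪ p.2) ∩ a = p.1 := by
      rw [Finset.union_inter_distrib_right, Finset.inter_eq_left.2 hp.1,
        Finset.disjoint_iff_inter_eq_empty.1 (h.symm.mono_left hp.2), Finset.union_empty]
    have h2 : (p.1 ∪ p.2) ∩ b = p.2 := by
      rw [Finset.union_inter_distrib_right, Finset.inter_eq_left.2 hp.2,
        Finset.disjoint_iff_inter_eq_empty.1 (h.mono_left hp.1), Finset.empty_union]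
    show ((p.1 ∪ p.2) ∩ a, (p.1 ∪ p.2) ∩ b) = p
    rw [h1, h2]
  · intro S hS
    rw [mem_powerset] at hS
    rw [← Finset.inter_union_distrib_left, Finset.inter_eq_left.2 hS]

theorem factorization_implies_independence {V : Type*} [Fintype V] [DecidableEq V]
    (π : Finset V → ℝ) (hpos : ∀ H : Finset V, 0 < π H)
    (hsum : ∑ H ∈ (univ : Finset V).powerset, π H = 1)
    (A B : Finset V) (hA : A.Nonempty) (hB : B.Nonempty) (hdisj : Disjoint A B)
    (hfact : ∀ A' ⊆ A, ∀ B' ⊆ B, mu π (A' ∪ B') = mu π A' * mu π B') :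
    ∀ i ⊆ A ∪ B,
      cellProb π (A ∪ B) i = cellProb π A (i ∩ A) * cellProb π B (i ∩ B) := by
  intro i hi
  have hiA : i ∩ A ⊆ A := Finset.inter_subset_right
  have hiB : i ∩ B ⊆ B := Finset.inter_subset_right
  have hsplit : (A ∪ B) \ i = (A \ (i ∩ A)) ∪ (B \ (i ∩ B)) := by
    ext x
    simp only [mem_sdiff, mem_union, mem_inter, not_and]
    tauto
  have hdisj' : Disjoint (A \ (i ∩ A)) (B \ (i ∩ B)) :=
    hdisj.mono Finset.sdiff_subset Finset.sdiff_subset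
  have hiuni : i = (i ∩ A) ∪ (i ∩ B) := by
    rw [← Finset.inter_union_distrib_left]
    exact (Finset.inter_eq_left.2 hi).symm
  rw [cell_eq_alt π (A ∪ B) i hi, cell_eq_alt π A (i ∩ A) hiA,
    cell_eq_alt π B (i ∩ B) hiB, hsplit, sum_powerset_union_disjoint hdisj',
    Finset.sum_mul_sum]
  refine Finset.sum_congr rfl fun s hs => Finset.sum_congr rfl fun t ht => ?_
  rw [mem_powerset] at hs ht
  have hst : Disjoint s t := hdisj'.mono hs ht
  have hsA : s ⊆ A := hs.trans Finset.sdiff_subset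
  have htB : t ⊆ B := ht.trans Finset.sdiff_subset
  have hcard : (s ∪ t).card = s.card + t.card := Finset.card_union_of_disjoint hst
  have hset : i ∪ (s ∪ t) = (i ∩ A ∪ s) ∪ (i ∩ B ∪ t) := by
    ext x
    simp only [mem_union, mem_inter]
    have hx : x ∈ i → x ∈ A ∨ x ∈ B := fun h => Finset.mem_union.1 (hi h)
    tauto
  rw [hset, hfact (i ∩ A ∪ s) (Finset.union_subset hiA hsA)
    (i ∩ B ∪ t) (Finset.union_subset hiB htB), hcard, pow_add]
  ring
end

section
/- In direction (iii)⇒(ii) of the previous equivalence, the key inductive step holds: if μ_{A'∪B'} = μ_{A'}·μ_{B'} for all A' ⊆ A, B' ⊆ B with A'∪B' ≠ A∪B, then γ_{A∪B} = log μ_{A∪B} − log μ_A − log μ_B. -/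
open Finset

theorem gamma_inductive_step {V : Type*} [Fintype V] [DecidableEq V]
    (μ : Finset V → ℝ) (hpos : ∀ D : Finset V, 0 < μ D) (hempty : μ ∅ = 1)
    (γ : Finset V → ℝ)
    (hγ : ∀ D : Finset V, γ D = ∑ E ∈ D.powerset, (-1 : ℝ) ^ (D \ E).card * Real.log (μ E))
    (A B : Finset V) (hA : A.Nonempty) (hB : B.Nonempty) (hdisj : Disjoint A B)
    (hfact : ∀ A' ⊆ A, ∀ B' ⊆ B, A' ∪ B' ≠ A ∪ B → μ (A' ∪ B') = μ A' * μ B') :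
    γ (A ∪ B) = Real.log (μ (A ∪ B)) - Real.log (μ A) - Real.log (μ B) := by
  classical
  -- alternating sum over powerset of a nonempty set is zero
  have hzero : ∀ (D : Finset V), D.Nonempty →
      ∑ E ∈ D.powerset, (-1 : ℝ) ^ (D \ E).card = 0 := by
    intro D hD
    have h1 : ∀ E ∈ D.powerset, ((-1 : ℝ)) ^ (D \ E).card
        = (-1 : ℝ) ^ D.card * (-1 : ℝ) ^ E.card := by
      intro E hE
      rw [mem_powerset] at hE
      have hc : (D \ E).card + E.card = D.card := by
        rw [card_sdiff_of_subset hE]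
        exact Nat.sub_add_cancel (card_le_card hE)
      have : ((-1 : ℝ)) ^ ((D \ E).card + E.card) = (-1 : ℝ) ^ D.card := by rw [hc]
      rw [pow_add] at this
      have h2 : ((-1 : ℝ)) ^ E.card * (-1 : ℝ) ^ E.card = 1 := by
        rw [← pow_add, ← two_mul, pow_mul]; norm_num
      calc (-1 : ℝ) ^ (D \ E).card
          = (-1 : ℝ) ^ (D \ E).card * ((-1 : ℝ) ^ E.card * (-1 : ℝ) ^ E.card) := by
            rw [h2, mul_one]
        _ = ((-1 : ℝ) ^ (D \ E).card * (-1 : ℝ) ^ E.card) * (-1 : ℝ) ^ E.card := by ring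
        _ = (-1 : ℝ) ^ D.card * (-1 : ℝ) ^ E.card := by rw [this]
    rw [Finset.sum_congr rfl h1, ← Finset.mul_sum]
    have h3 : ∑ E ∈ D.powerset, (-1 : ℝ) ^ E.card = 0 := by
      have := Finset.sum_powerset_neg_one_pow_card_of_nonempty hD
      have : ((∑ m ∈ D.powerset, (-1 : ℤ) ^ m.card : ℤ) : ℝ) = 0 := by rw [this]; simp
      push_cast at this
      exact this
    rw [h3, mul_zero]
  -- reindex the sum over powerset (A ∪ B) by pairs
  have key : γ (A ∪ B) = ∑ p ∈ A.powerset ×ˢ B.powerset,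
      (-1 : ℝ) ^ ((A \ p.1).card + (B \ p.2).card) * Real.log (μ (p.1 ∪ p.2)) := by
    rw [hγ]
    refine Finset.sum_nbij' (fun E => (E ∩ A, E ∩ B)) (fun p => p.1 ∪ p.2) ?_ ?_ ?_ ?_ ?_
    · intro E _
      simp [Finset.mem_product, inter_subset_right]
    · intro p hp
      rw [Finset.mem_product] at hp
      rw [mem_powerset]
      exact union_subset_union (mem_powerset.1 hp.1) (mem_powerset.1 hp.2)
    · intro E hE
      rw [mem_powerset] at hE
      show E ∩ A ∪ E ∩ B = E
      rw [← inter_union_distrib_left, Finset.inter_eq_left.2 hE]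
    · intro p hp
      rw [Finset.mem_product, mem_powerset, mem_powerset] at hp
      show ((p.1 ∪ p.2) ∩ A, (p.1 ∪ p.2) ∩ B) = p
      have h1 : (p.1 ∪ p.2) ∩ A = p.1 := by
        rw [union_inter_distrib_right, Finset.inter_eq_left.2 hp.1,
          Finset.disjoint_iff_inter_eq_empty.1 (Finset.disjoint_of_subset_left hp.2 hdisj.symm), union_empty]
      have h2 : (p.1 ∪ p.2) ∩ B = p.2 := by
        rw [union_inter_distrib_right, Finset.inter_eq_left.2 hp.2,
          Finset.disjoint_iff_inter_eq_empty.1 (Finset.disjoint_of_subset_left hp.1 hdisj), empty_union]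
      ext <;> simp [h1, h2]
    · intro E hE
      rw [mem_powerset] at hE
      have hun : E ∩ A ∪ E ∩ B = E := by
        rw [← inter_union_distrib_left, Finset.inter_eq_left.2 hE]
      have hcard : ((A ∪ B) \ E).card = (A \ (E ∩ A)).card + (B \ (E ∩ B)).card := by
        have hA1 : A \ (E ∩ A) = A \ E := by
          ext x; simp [mem_sdiff]
        have hB1 : B \ (E ∩ B) = B \ E := by
          ext x; simp [mem_sdiff]
        rw [hA1, hB1, Finset.union_sdiff_distrib,
          Finset.card_union_of_disjoint (Finset.disjoint_of_subset_left (sdiff_subset)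
            (Finset.disjoint_of_subset_right (sdiff_subset) hdisj))]
      rw [hcard, hun]
  -- the factored version of the sum
  set T' : ℝ := ∑ p ∈ A.powerset ×ˢ B.powerset,
      (-1 : ℝ) ^ ((A \ p.1).card + (B \ p.2).card) *
        (Real.log (μ p.1) + Real.log (μ p.2)) with hT'def
  -- difference between the two sums is exactly the correction term
  have hdiff : (∑ p ∈ A.powerset ×ˢ B.powerset,
      (-1 : ℝ) ^ ((A \ p.1).card + (B \ p.2).card) * Real.log (μ (p.1 ∪ p.2))) - T'
      = Real.log (μ (A ∪ B)) - Real.log (μ A) - Real.log (μ B) := by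
    rw [hT'def, ← Finset.sum_sub_distrib]
    rw [Finset.sum_eq_single ((A, B) : Finset V × Finset V)]
    · simp [sdiff_self]
      ring
    · intro p hp hne
      rw [Finset.mem_product, mem_powerset, mem_powerset] at hp
      have hne' : p.1 ∪ p.2 ≠ A ∪ B := by
        intro h
        apply hne
        have h1 : p.1 = A := by
          have := congrArg (· ∩ A) h
          rw [union_inter_distrib_right, Finset.inter_eq_left.2 hp.1,
            Finset.disjoint_iff_inter_eq_empty.1 (Finset.disjoint_of_subset_left hp.2 hdisj.symm), union_empty,
            union_inter_distrib_right, Finset.inter_eq_left.2 (subset_refl A),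
            Finset.disjoint_iff_inter_eq_empty.1 hdisj.symm, union_empty] at this
          exact this
        have h2 : p.2 = B := by
          have := congrArg (· ∩ B) h
          rw [union_inter_distrib_right, Finset.inter_eq_left.2 hp.2,
            Finset.disjoint_iff_inter_eq_empty.1 (Finset.disjoint_of_subset_left hp.1 hdisj), empty_union,
            union_inter_distrib_right, Finset.inter_eq_left.2 (subset_refl B),
            Finset.disjoint_iff_inter_eq_empty.1 hdisj, empty_union] at this
          exact this
        exact Prod.ext h1 h2
      rw [hfact p.1 hp.1 p.2 hp.2 hne',
        Real.log_mul (ne_of_gt (hpos p.1)) (ne_of_gt (hpos p.2))]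
      ring
    · intro h
      exact absurd (Finset.mem_product.2 ⟨mem_powerset_self A, mem_powerset_self B⟩) h
  -- the factored sum vanishes
  have hT0 : T' = 0 := by
    rw [hT'def, Finset.sum_product]
    have step : ∀ A' ∈ A.powerset,
        (∑ B' ∈ B.powerset, (-1 : ℝ) ^ ((A \ A').card + (B \ B').card) *
          (Real.log (μ A') + Real.log (μ B')))
        = (-1 : ℝ) ^ (A \ A').card *
            (∑ B' ∈ B.powerset, (-1 : ℝ) ^ (B \ B').card * Real.log (μ B')) := by
      intro A' _
      have : ∀ B' ∈ B.powerset, (-1 : ℝ) ^ ((A \ A').card + (B \ B').card) *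
          (Real.log (μ A') + Real.log (μ B'))
          = ((-1 : ℝ) ^ (A \ A').card * Real.log (μ A')) * (-1 : ℝ) ^ (B \ B').card
            + (-1 : ℝ) ^ (A \ A').card * ((-1 : ℝ) ^ (B \ B').card * Real.log (μ B')) := by
        intro B' _
        rw [pow_add]; ring
      rw [Finset.sum_congr rfl this, Finset.sum_add_distrib, ← Finset.mul_sum,
        hzero B hB, mul_zero, zero_add, ← Finset.mul_sum]
    rw [Finset.sum_congr rfl step, ← Finset.sum_mul, hzero A hA, zero_mul]
  rw [key, ← hdiff, hT0, sub_zero]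
end

section
/- Theorem (marginal independence characterization): for a vector X_V of binary variables with strictly positive distribution and disjoint nonempty proper subsets A, B of V, X_A ⫫ X_B if and only if γ_{A'∪B'} = 0 for every nonempty A' ⊆ A and nonempty B' ⊆ B, where γ is the log-mean linear parameter. -/
open Finset

section Aux

set_option linter.unusedSectionVars false

variable {V : Type*} [Fintype V] [DecidableEq V]

lemma alt_sum (i j : Finset V) (hij : i ⊆ j) :
    ∑ E ∈ j.powerset.filter (fun E => i ⊆ E), (-1:ℝ)^(E \ i).card
      = if j = i then 1 else 0 := by
  have h1 : ∑ E ∈ j.powerset.filter (fun E => i ⊆ E), (-1:ℝ)^(E \ i).card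
      = ∑ F ∈ (j \ i).powerset, (-1:ℝ)^F.card := by
    refine Finset.sum_nbij' (fun E => E \ i) (fun F => F ∪ i) ?_ ?_ ?_ ?_ ?_
    · intro E hE
      simp only [mem_filter, mem_powerset] at hE
      exact mem_powerset.2 (sdiff_subset_sdiff hE.1 (Finset.Subset.refl i))
    · intro F hF
      simp only [mem_powerset] at hF
      simp only [mem_filter, mem_powerset]
      exact ⟨union_subset (hF.trans (sdiff_subset)) hij, subset_union_right⟩
    · intro E hE
      simp only [mem_filter, mem_powerset] at hE
      exact sdiff_union_of_subset hE.2
    · intro F hF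
      simp only [mem_powerset] at hF
      have : Disjoint F i := disjoint_of_subset_left hF sdiff_disjoint
      exact union_sdiff_cancel_right this
    · intro E _; rfl
  rw [h1]
  have := @Finset.sum_powerset_neg_one_pow_card V _ (j \ i)
  have h2 : ((∑ m ∈ (j\i).powerset, (-1:ℤ)^m.card : ℤ) : ℝ)
      = ∑ F ∈ (j \ i).powerset, (-1:ℝ)^F.card := by push_cast; rfl
  rw [← h2, this]
  have h3 : j \ i = ∅ ↔ j = i := by
    rw [sdiff_eq_empty_iff_subset]
    exact ⟨fun h => subset_antisymm h hij, fun h => h.le⟩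
  by_cases h : j = i <;> simp [h, h3]

lemma alt_zero (A' : Finset V) (hA : A'.Nonempty) :
    ∑ E ∈ A'.powerset, (-1:ℝ)^((A' \ E).card) = 0 := by
  have : ∑ E ∈ A'.powerset, (-1:ℝ)^((A' \ E).card)
      = ∑ F ∈ A'.powerset, (-1:ℝ)^F.card := by
    refine Finset.sum_nbij' (fun E => A' \ E) (fun F => A' \ F) ?_ ?_ ?_ ?_ ?_ <;>
      simp +contextual [mem_powerset, sdiff_sdiff_right_self, inf_eq_inter,
        inter_eq_right, sdiff_subset]
  rw [this]
  have h2 : ((∑ m ∈ A'.powerset, (-1:ℤ)^m.card : ℤ) : ℝ)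
      = ∑ F ∈ A'.powerset, (-1:ℝ)^F.card := by push_cast; rfl
  rw [← h2, Finset.sum_powerset_neg_one_pow_card_of_nonempty hA]
  simp

lemma mobius_A (D : Finset V) (g : Finset V → ℝ) :
    ∑ E ∈ D.powerset, ∑ F ∈ E.powerset, (-1:ℝ)^(E \ F).card * g F = g D := by
  rw [Finset.sum_comm' (s' := fun F => D.powerset.filter (fun E => F ⊆ E))
    (t' := D.powerset) (by
      intro E F
      simp only [mem_powerset, mem_filter]
      constructor
      · rintro ⟨h1, h2⟩; exact ⟨⟨h1, h2⟩, h2.trans h1⟩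
      · rintro ⟨⟨h1, h2⟩, _⟩; exact ⟨h1, h2⟩)]
  have : ∀ F ∈ D.powerset, ∑ E ∈ D.powerset.filter (fun E => F ⊆ E),
      (-1:ℝ)^(E \ F).card * g F = (if D = F then 1 else 0) * g F := by
    intro F hF
    rw [← Finset.sum_mul, alt_sum F D (mem_powerset.1 hF)]
  rw [Finset.sum_congr rfl this]
  simp

lemma mobius_B (A i : Finset V) (hi : i ⊆ A) (g : Finset V → ℝ) :
    ∑ D ∈ A.powerset.filter (fun D => i ⊆ D), (-1:ℝ)^(D \ i).card *
      ∑ j ∈ A.powerset.filter (fun j => D ⊆ j), g j = g i := by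
  have hrw : ∀ D, (-1:ℝ)^(D \ i).card * ∑ j ∈ A.powerset.filter (fun j => D ⊆ j), g j
      = ∑ j ∈ A.powerset.filter (fun j => D ⊆ j), (-1:ℝ)^(D \ i).card * g j := by
    intro D; rw [Finset.mul_sum]
  simp only [hrw]
  rw [Finset.sum_comm' (s' := fun j => j.powerset.filter (fun D => i ⊆ D))
    (t' := A.powerset.filter (fun j => i ⊆ j)) (by
      intro D j
      simp only [mem_powerset, mem_filter]
      constructor
      · rintro ⟨⟨h1, h2⟩, h3, h4⟩; exact ⟨⟨h4, h2⟩, h3, h2.trans h4⟩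
      · rintro ⟨⟨h1, h2⟩, h3, _⟩; exact ⟨⟨h1.trans h3, h2⟩, h3, h1⟩)]
  have : ∀ j ∈ A.powerset.filter (fun j => i ⊆ j),
      ∑ D ∈ j.powerset.filter (fun D => i ⊆ D), (-1:ℝ)^(D \ i).card * g j
        = (if j = i then 1 else 0) * g j := by
    intro j hj
    simp only [mem_filter, mem_powerset] at hj
    rw [← Finset.sum_mul, alt_sum i j hj.2]
  rw [Finset.sum_congr rfl this]
  simp only [ite_mul, one_mul, zero_mul, Finset.sum_ite_eq', mem_filter, mem_powerset]
  simp [hi]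

lemma sum_union_split (A B : Finset V) (hd : Disjoint A B) (ia ib : Finset V)
    (hia : ia ⊆ A) (hib : ib ⊆ B) (f : Finset V → ℝ) :
    ∑ D ∈ (A ∪ B).powerset.filter (fun D => ia ∪ ib ⊆ D), f D
      = ∑ Da ∈ A.powerset.filter (fun D => ia ⊆ D),
          ∑ Db ∈ B.powerset.filter (fun D => ib ⊆ D), f (Da ∪ Db) := by
  rw [← Finset.sum_product']
  refine Finset.sum_nbij' (fun D => (D ∩ A, D ∩ B)) (fun p => p.1 ∪ p.2) ?_ ?_ ?_ ?_ ?_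
  · intro D hD
    simp only [mem_filter, mem_powerset, union_subset_iff] at hD
    simp only [mem_product, mem_filter, mem_powerset]
    exact ⟨⟨inter_subset_right, subset_inter (hD.2.1) hia⟩,
      ⟨inter_subset_right, subset_inter (hD.2.2) hib⟩⟩
  · intro p hp
    simp only [mem_product, mem_filter, mem_powerset] at hp
    simp only [mem_filter, mem_powerset, union_subset_iff]
    exact ⟨⟨hp.1.1.trans subset_union_left, hp.2.1.trans subset_union_right⟩,
      hp.1.2.trans subset_union_left, hp.2.2.trans subset_union_right⟩
  · intro D hD
    simp only [mem_filter, mem_powerset] at hD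
    simp only [← inter_union_distrib_left, inter_eq_left]
    exact hD.1
  · intro p hp
    simp only [mem_product, mem_filter, mem_powerset] at hp
    have h1 : p.2 ∩ A = ∅ := by
      rw [← disjoint_iff_inter_eq_empty]; exact disjoint_of_subset_left hp.2.1 hd.symm
    have h2 : p.1 ∩ B = ∅ := by
      rw [← disjoint_iff_inter_eq_empty]; exact disjoint_of_subset_left hp.1.1 hd
    have e1 : (p.1 ∪ p.2) ∩ A = p.1 := by
      rw [union_inter_distrib_right, h1, inter_eq_left.2 hp.1.1, union_empty]
    have e2 : (p.1 ∪ p.2) ∩ B = p.2 := by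
      rw [union_inter_distrib_right, h2, inter_eq_left.2 hp.2.1, empty_union]
    simp [e1, e2]
  · intro D hD
    simp only [mem_filter, mem_powerset] at hD
    rw [← inter_union_distrib_left, inter_eq_left.2 hD.1]

lemma sum_union_split0 (A B : Finset V) (hd : Disjoint A B) (f : Finset V → ℝ) :
    ∑ D ∈ (A ∪ B).powerset, f D
      = ∑ Da ∈ A.powerset, ∑ Db ∈ B.powerset, f (Da ∪ Db) := by
  have h := sum_union_split A B hd ∅ ∅ (empty_subset _) (empty_subset _) f
  simpa using h

lemma card_split (A B : Finset V) (hd : Disjoint A B) (ia ib Da Db : Finset V)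
    (hDa : Da ⊆ A) (hDb : Db ⊆ B) (hia : ia ⊆ A) (hib : ib ⊆ B) :
    ((Da ∪ Db) \ (ia ∪ ib)).card = (Da \ ia).card + (Db \ ib).card := by
  have d1 : Disjoint Da ib := hd.mono hDa hib
  have d2 : Disjoint Db ia := hd.symm.mono hDb hia
  have e1 : Da \ (ia ∪ ib) = Da \ ia := by
    ext a
    simp only [mem_sdiff, mem_union, not_or]
    exact ⟨fun ⟨h, hi, _⟩ => ⟨h, hi⟩,
      fun ⟨h, hi⟩ => ⟨h, hi, Finset.disjoint_left.1 d1 h⟩⟩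
  have e2 : Db \ (ia ∪ ib) = Db \ ib := by
    ext a
    simp only [mem_sdiff, mem_union, not_or]
    exact ⟨fun ⟨h, _, hi⟩ => ⟨h, hi⟩,
      fun ⟨h, hi⟩ => ⟨h, Finset.disjoint_left.1 d2 h, hi⟩⟩
  rw [union_sdiff_distrib, e1, e2,
    card_union_of_disjoint (hd.mono (sdiff_subset.trans hDa) (sdiff_subset.trans hDb))]

variable (π : Finset V → ℝ)

lemma mu_pos (hpos : ∀ H : Finset V, 0 < π H) (D : Finset V) : 0 < mu π D := by
  refine Finset.sum_pos (fun H _ => hpos H) ⟨univ, ?_⟩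
  simp [mem_filter]

lemma mu_empty (hsum : ∑ H ∈ (univ : Finset V).powerset, π H = 1) :
    mu π (∅ : Finset V) = 1 := by
  rw [mu, Finset.filter_true_of_mem (by simp), hsum]

lemma gam_empty (hsum : ∑ H ∈ (univ : Finset V).powerset, π H = 1) :
    gam π (∅ : Finset V) = 0 := by
  simp [gam, mu_empty π hsum]

lemma mu_sum_cell (A D : Finset V) (hDA : D ⊆ A) :
    mu π D = ∑ i ∈ A.powerset.filter (fun i => D ⊆ i), cellProb π A i := by
  unfold cellProb
  have key : ∀ i ∈ A.powerset.filter (fun i => D ⊆ i),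
      (univ.powerset.filter (fun H => H ∩ A = i) : Finset (Finset V))
        = (univ.powerset.filter (fun H => D ⊆ H)).filter (fun H => H ∩ A = i) := by
    intro i hi
    simp only [mem_filter, mem_powerset] at hi
    rw [Finset.filter_filter]
    apply Finset.filter_congr
    intro H _
    constructor
    · intro h; exact ⟨hi.2.trans (h ▸ inter_subset_left), h⟩
    · exact fun h => h.2
  rw [Finset.sum_congr rfl (fun i hi => by rw [key i hi])]
  rw [Finset.sum_fiberwise_of_maps_to (g := fun H => H ∩ A) ?_ π]
  · rfl
  · intro H hH
    simp only [mem_filter, mem_powerset] at hH ⊢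
    exact ⟨inter_subset_right, subset_inter hH.2 hDA⟩

lemma cellProb_alt (A i : Finset V) (hi : i ⊆ A) :
    cellProb π A i
      = ∑ D ∈ A.powerset.filter (fun D => i ⊆ D), (-1:ℝ)^(D \ i).card * mu π D := by
  rw [Finset.sum_congr rfl (fun D hD => by
    rw [mu_sum_cell π A D (mem_powerset.1 (mem_filter.1 hD).1)])]
  rw [mobius_B A i hi (cellProb π A)]

lemma log_mu_eq_sum_gam (D : Finset V) :
    Real.log (mu π D) = ∑ E ∈ D.powerset, gam π E := by
  unfold gam
  exact (mobius_A D (fun F => Real.log (mu π F))).symm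

end Aux

theorem marginal_independence_iff_gamma_zero {V : Type*} [Fintype V] [DecidableEq V]
    (π : Finset V → ℝ) (hpos : ∀ H : Finset V, 0 < π H)
    (hsum : ∑ H ∈ (univ : Finset V).powerset, π H = 1)
    (A B : Finset V) (hA : A.Nonempty) (hB : B.Nonempty) (hdisj : Disjoint A B)
    (hApr : A ≠ univ) (hBpr : B ≠ univ) :
    (∀ ia ⊆ A, ∀ ib ⊆ B,
        cellProb π (A ∪ B) (ia ∪ ib) = cellProb π A ia * cellProb π B ib) ↔
      (∀ A' ⊆ A, ∀ B' ⊆ B, A'.Nonempty → B'.Nonempty → gam π (A' ∪ B') = 0) := by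
  constructor
  · -- independence implies gamma vanishes
    intro hind A' hA' B' hB' hA'ne hB'ne
    have hd' : Disjoint A' B' := hdisj.mono hA' hB'
    -- mu factorizes
    have mu_factor : ∀ Ea ⊆ A, ∀ Eb ⊆ B, mu π (Ea ∪ Eb) = mu π Ea * mu π Eb := by
      intro Ea hEa Eb hEb
      rw [mu_sum_cell π (A ∪ B) (Ea ∪ Eb) (union_subset_union hEa hEb),
        sum_union_split A B hdisj Ea Eb hEa hEb,
        mu_sum_cell π A Ea hEa, mu_sum_cell π B Eb hEb, Finset.sum_mul_sum]
      refine Finset.sum_congr rfl fun Da hDa => Finset.sum_congr rfl fun Db hDb => ?_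
      simp only [mem_filter, mem_powerset] at hDa hDb
      exact hind Da hDa.1 Db hDb.1
    have term_eq : ∀ Ea ∈ A'.powerset, ∀ Eb ∈ B'.powerset,
        (-1:ℝ)^((A' ∪ B') \ (Ea ∪ Eb)).card * Real.log (mu π (Ea ∪ Eb))
          = ((-1:ℝ)^(A' \ Ea).card * Real.log (mu π Ea)) * (-1:ℝ)^(B' \ Eb).card
            + (-1:ℝ)^(A' \ Ea).card * ((-1:ℝ)^(B' \ Eb).card * Real.log (mu π Eb)) := by
      intro Ea hEa Eb hEb
      simp only [mem_powerset] at hEa hEb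
      have hEaA : Ea ⊆ A := hEa.trans hA'
      have hEbB : Eb ⊆ B := hEb.trans hB'
      rw [card_split A B hdisj Ea Eb A' B' hA' hB' hEaA hEbB, pow_add,
        mu_factor Ea hEaA Eb hEbB,
        Real.log_mul (ne_of_gt (mu_pos π hpos Ea)) (ne_of_gt (mu_pos π hpos Eb))]
      ring
    unfold gam
    rw [sum_union_split0 A' B' hd' (fun E => (-1:ℝ)^((A' ∪ B') \ E).card
      * Real.log (mu π E))]
    rw [Finset.sum_congr rfl (fun Ea hEa =>
      Finset.sum_congr rfl (fun Eb hEb => term_eq Ea hEa Eb hEb))]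
    simp only [Finset.sum_add_distrib]
    rw [← Finset.sum_mul_sum, ← Finset.sum_mul_sum, alt_zero A' hA'ne, alt_zero B' hB'ne]
    ring
  · -- gamma vanishes implies independence
    intro hg
    have mu_fact : ∀ A' ⊆ A, ∀ B' ⊆ B, mu π (A' ∪ B') = mu π A' * mu π B' := by
      intro A' hA' B' hB'
      have hd' : Disjoint A' B' := hdisj.mono hA' hB'
      have hl : Real.log (mu π (A' ∪ B'))
          = Real.log (mu π A') + Real.log (mu π B') := by
        rw [log_mu_eq_sum_gam, sum_union_split0 A' B' hd' (gam π)]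
        have inner_eq : ∀ Ea ∈ A'.powerset,
            ∑ Eb ∈ B'.powerset, gam π (Ea ∪ Eb)
              = gam π Ea + ∑ Eb ∈ B'.powerset.erase ∅, gam π (Ea ∪ Eb) := by
          intro Ea _
          rw [← Finset.add_sum_erase _ _ (mem_powerset.2 (empty_subset B'))]
          rw [union_empty]
        rw [Finset.sum_congr rfl inner_eq, Finset.sum_add_distrib]
        have hz : ∀ Ea ∈ A'.powerset, Ea ≠ ∅ →
            ∑ Eb ∈ B'.powerset.erase ∅, gam π (Ea ∪ Eb) = 0 := by
          intro Ea hEa hne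
          refine Finset.sum_eq_zero fun Eb hEb => ?_
          simp only [mem_erase, mem_powerset] at hEb
          exact hg Ea ((mem_powerset.1 hEa).trans hA') Eb (hEb.2.trans hB')
            (nonempty_iff_ne_empty.2 hne) (nonempty_iff_ne_empty.2 hEb.1)
        rw [Finset.sum_eq_single_of_mem ∅ (mem_powerset.2 (empty_subset A')) hz]
        have : ∑ Eb ∈ B'.powerset.erase ∅, gam π ((∅ : Finset V) ∪ Eb)
            = Real.log (mu π B') := by
          rw [log_mu_eq_sum_gam, ← Finset.add_sum_erase _ _
            (mem_powerset.2 (empty_subset B')), gam_empty π hsum, zero_add]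
          exact Finset.sum_congr rfl fun Eb _ => by rw [empty_union]
        rw [this, ← log_mu_eq_sum_gam]
      have := congrArg Real.exp hl
      rwa [Real.exp_log (mu_pos π hpos _), Real.exp_add,
        Real.exp_log (mu_pos π hpos _), Real.exp_log (mu_pos π hpos _)] at this
    intro ia hia ib hib
    rw [cellProb_alt π (A ∪ B) (ia ∪ ib) (union_subset_union hia hib),
      sum_union_split A B hdisj ia ib hia hib,
      cellProb_alt π A ia hia, cellProb_alt π B ib hib, Finset.sum_mul_sum]
    refine Finset.sum_congr rfl fun Da hDa => Finset.sum_congr rfl fun Db hDb => ?_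
    simp only [mem_filter, mem_powerset] at hDa hDb
    rw [card_split A B hdisj ia ib Da Db hDa.1 hDb.1 hia hib, pow_add,
      mu_fact Da hDa.1 Db hDb.1]
    ring
end
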